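/- arXiv:1911.01131 — 3 statements merged into one kernel-verified Lean document; each statement's English description precedes it below -/
import Mathlib

section
/- Let p be an odd prime and α, β nonnegative integers. If 3·p^α + 2 = p^β, then α = 0, β = 1, and p = 5. -/
theorem stmt_0 (p : ℕ) (hp : p.Prime) (hodd : Odd p) (α β : ℕ)
    (h : 3 * p ^ α + 2 = p ^ β) : α = 0 ∧ β = 1 ∧ p = 5 := by
  have hp2 : p ≠ 2 := by rintro rfl; exact (Nat.not_odd_iff_even.mpr even_two) hodd
  have hα : α = 0 := by
    by_contra hα
    have hβ : β ≠ 0 := by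
      rintro rfl
      simp at h
    have h1 : p ∣ p ^ α := dvd_pow_self p hα
    have h2 : p ∣ p ^ β := dvd_pow_self p hβ
    have : p ∣ 2 := (Nat.dvd_add_right (Dvd.dvd.mul_left h1 3)).mp (h ▸ h2)
    have := Nat.le_of_dvd two_pos this
    have := hp.two_le
    omega
  subst hα
  simp at h
  have h5 : p ^ β = 5 := h.symm
  have hβ : β = 1 := by
    rcases Nat.lt_or_ge β 2 with hb | hb
    · interval_cases β <;> simp_all
    · exfalso
      have : p ^ 2 ≤ p ^ β := Nat.pow_le_pow_right hp.pos hb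
      have hp3 : 3 ≤ p := by
        rcases hp.two_le.lt_or_eq with h' | h'
        · omega
        · omega
      nlinarith
  subst hβ
  simp at h5
  exact ⟨rfl, rfl, h5⟩
end

section
/- Let α, β be nonnegative integers. If 5·3^α + 4 = 3^β, then α = 0 and β = 2. -/
theorem stmt_2 (α β : ℕ) (h : 5 * 3 ^ α + 4 = 3 ^ β) : α = 0 ∧ β = 2 := by
  rcases α with _ | n
  · simp only [pow_zero, mul_one] at h
    have : (3:ℕ) ^ 2 = 3 ^ β := by omega
    have := Nat.pow_right_injective (by norm_num) this
    omega
  · exfalso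
    rcases β with _ | m
    · have : 1 ≤ 3 ^ (n+1) := Nat.one_le_pow _ _ (by norm_num)
      simp at h
    · have e1 : (3:ℕ) ^ (n+1) = 3 * 3 ^ n := by ring
      have e2 : (3:ℕ) ^ (m+1) = 3 * 3 ^ m := by ring
      omega
end

section
/- Let e ≥ 2. Over F_{3^e}, the polynomial f(X) = X^4 + aX^2 with a ∈ F_{3^e}^* is not planar: there exist nonzero x, y ∈ F_{3^e} with x^2 + y^2 = a, so that the difference function Δ_f(x, y) = f(x+y) − f(x) − f(y) vanishes at a point with xy ≠ 0. -/
open Finset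

private lemma aux_sq_card (F : Type*) [Field F] [Fintype F] [DecidableEq F] (h2 : (2:F) ≠ 0) :
    2 * ((univ : Finset F).image (· ^ 2)).card = Fintype.card F + 1 := by
  set sqs := (univ : Finset F).image (· ^ 2) with hsqs
  have h0 : (0 : F) ∈ sqs := mem_image.mpr ⟨0, mem_univ _, by ring⟩
  have key := Finset.card_eq_sum_card_image (fun x : F => x ^ 2) (univ : Finset F)
  have hfib : ∀ b ∈ sqs, (univ.filter (fun x : F => x ^ 2 = b)).card = if b = 0 then 1 else 2 := by
    intro b hb
    obtain ⟨c, -, hc⟩ := mem_image.mp hb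
    split_ifs with hb0
    · subst hb0
      rw [show univ.filter (fun x : F => x ^ 2 = 0) = {0} by ext x; simp [pow_eq_zero_iff]]
      simp
    · have hc0 : c ≠ 0 := fun h => hb0 (by rw [← hc, h]; ring)
      rw [show univ.filter (fun x : F => x ^ 2 = b) = {c, -c} by
        ext x; simp [← hc, sq_eq_sq_iff_eq_or_eq_neg]]
      rw [card_insert_of_notMem (by
        simp only [mem_singleton]
        intro h
        exact hc0 (by have : (2:F) * c = 0 := by linear_combination h
                      rcases mul_eq_zero.mp this with h' | h'
                      · exact absurd h' h2
                      · exact h')), card_singleton]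
  rw [sum_congr rfl hfib] at key
  rw [← Finset.sum_erase_add _ _ h0, if_pos rfl] at key
  have herase : ∑ b ∈ sqs.erase 0, (if b = 0 then 1 else 2) = 2 * (sqs.card - 1) := by
    rw [Finset.sum_ite_of_false, Finset.sum_const, card_erase_of_mem h0]
    · ring
    · intro b hb; exact ne_of_mem_erase hb
  rw [herase] at key
  have hpos : 1 ≤ sqs.card := card_pos.mpr ⟨0, h0⟩
  rw [Finset.card_univ] at key
  omega

private lemma aux_sum_univ (F : Type*) [Field F] [Fintype F] (h2 : (2:F) ≠ 0) :
    ∑ x : F, x = 0 := by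
  have h : ∑ x : F, x = ∑ x : F, -x :=
    Fintype.sum_bijective (fun x : F => -x) neg_involutive.bijective _ _
      (fun x => (neg_neg x).symm)
  rw [Finset.sum_neg_distrib] at h
  have h' : (2:F) * ∑ x : F, x = 0 := by linear_combination h
  rcases mul_eq_zero.mp h' with h'' | h''
  · exact absurd h'' h2
  · exact h''

private lemma aux_sum_sqs (F : Type*) [Field F] [Fintype F] [DecidableEq F]
    (hbig : 2 ≤ (((univ : Finset F).image (· ^ 2)).erase 0).card) :
    ∑ s ∈ ((univ : Finset F).image (· ^ 2)).erase 0, s = 0 := by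
  set T := ((univ : Finset F).image (· ^ 2)).erase 0 with hT
  obtain ⟨g, hgT, hg1⟩ := Finset.exists_mem_ne (s := T) hbig (1 : F)
  have hg0 : g ≠ 0 := ne_of_mem_erase hgT
  obtain ⟨gg, -, hgg⟩ := mem_image.mp (mem_of_mem_erase hgT)
  have hmem : ∀ s, s ∈ T ↔ (s ≠ 0 ∧ ∃ x, x ^ 2 = s) := by
    intro s
    simp [hT, mem_erase, mem_image]
  have hbij : ∀ s, s ∈ T ↔ g * s ∈ T := by
    intro s
    rw [hmem, hmem]
    constructor
    · rintro ⟨hs0, x, rfl⟩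
      exact ⟨mul_ne_zero hg0 hs0, gg * x, by rw [← hgg]; ring⟩
    · rintro ⟨hgs0, x, hx⟩
      refine ⟨fun h => hgs0 (by rw [h, mul_zero]), x / gg, ?_⟩
      have hgg0 : gg ≠ 0 := fun h => hg0 (by rw [← hgg, h]; ring)
      field_simp
      rw [hgg]
      linear_combination hx
  have hsum : ∑ s ∈ T, g * s = ∑ s ∈ T, s := by
    apply Finset.sum_nbij' (fun s => g * s) (fun s => g⁻¹ * s)
    · intro a ha; exact (hbij a).mp ha
    · intro a ha
      rw [hbij (g⁻¹ * a)]
      rwa [show g * (g⁻¹ * a) = a by field_simp]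
    · intro a ha; field_simp
    · intro a ha; field_simp
    · intro a ha; rfl
  rw [← Finset.mul_sum] at hsum
  have : (g - 1) * ∑ s ∈ T, s = 0 := by linear_combination hsum
  rcases mul_eq_zero.mp this with h | h
  · exact absurd (by linear_combination h) hg1
  · exact h

private lemma aux_A (F : Type*) [Field F] [Fintype F] [DecidableEq F]
    (hq0 : ((Fintype.card F : F)) = 0)
    (hcs : 2 * ((univ : Finset F).image (· ^ 2)).card = Fintype.card F + 1) :
    ∃ c : F, IsSquare c ∧ ¬ IsSquare (1 + c) := by
  by_contra hcon
  push_neg at hcon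
  set S := (univ : Finset F).image (· ^ 2) with hS
  have hmem : ∀ s : F, s ∈ S ↔ IsSquare s := by
    intro s
    simp only [hS, mem_image, mem_univ, true_and]
    constructor
    · rintro ⟨x, rfl⟩; exact ⟨x, (sq x).symm ▸ (sq x)⟩
    · rintro ⟨r, rfl⟩; exact ⟨r, (sq r)⟩
  have hsub : S.image (fun s => 1 + s) ⊆ S := by
    intro b hb
    obtain ⟨s, hs, rfl⟩ := mem_image.mp hb
    exact (hmem _).mpr (hcon s ((hmem s).mp hs))
  have hinj : (S.image (fun s => 1 + s)).card = S.card :=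
    Finset.card_image_of_injective _ (add_right_injective 1)
  have heq : S.image (fun s => 1 + s) = S :=
    Finset.eq_of_subset_of_card_le hsub (le_of_eq hinj.symm)
  have hsum : ∑ s ∈ S, (1 + s) = ∑ s ∈ S, s := by
    have h2 := Finset.sum_image (g := fun s : F => 1 + s) (s := S) (f := fun s : F => s)
      (fun x _ y _ h => add_left_cancel h)
    rw [heq] at h2
    exact h2.symm
  rw [Finset.sum_add_distrib, Finset.sum_const, nsmul_eq_mul, mul_one] at hsum
  have hcard0 : ((S.card : ℕ) : F) = 0 := by linear_combination hsum
  have : ((2 * S.card : ℕ) : F) = 0 := by push_cast; rw [hcard0]; ring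
  rw [hcs] at this
  push_cast at this
  rw [hq0] at this
  simp at this

private lemma aux_quot (F : Type*) [Field F] [Fintype F] [DecidableEq F] (a d : F)
    (ha : ¬ IsSquare a) (hd : ¬ IsSquare d) : IsSquare (a * d⁻¹) := by
  have ha0 : a ≠ 0 := fun h => ha (by rw [h]; exact ⟨0, by ring⟩)
  have hd0 : d ≠ 0 := fun h => hd (by rw [h]; exact ⟨0, by ring⟩)
  have hχa : quadraticChar F a = -1 := quadraticChar_neg_one_iff_not_isSquare.mpr ha
  have hχd : quadraticChar F d = -1 := quadraticChar_neg_one_iff_not_isSquare.mpr hd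
  have hm0 : a * d⁻¹ ≠ 0 := mul_ne_zero ha0 (inv_ne_zero hd0)
  have hχ : quadraticChar F (a * d⁻¹) = 1 := by
    have h1 : quadraticChar F (a * d⁻¹) * quadraticChar F d = -1 := by
      rw [← map_mul, show a * d⁻¹ * d = a by field_simp, hχa]
    rw [hχd] at h1
    have h2 : quadraticChar F (a * d⁻¹) * (-1) = 1 * (-1) := by rw [h1]; ring
    exact mul_right_cancel₀ (by norm_num) h2
  exact (quadraticChar_one_iff_isSquare hm0).mp hχ

private lemma aux_B (F : Type*) [Field F] [Fintype F] [DecidableEq F]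
    (h3 : (3 : F) = 0)
    (hq0 : ((Fintype.card F : F)) = 0)
    (hcs : 2 * ((univ : Finset F).image (· ^ 2)).card = Fintype.card F + 1)
    (hsumT : ∑ s ∈ (((univ : Finset F).image (· ^ 2)).erase 0), s = 0)
    (hsumU : ∑ x : F, x = 0) :
    ∃ lam w : F, lam ≠ 0 ∧ w ≠ 0 ∧ 1 + lam ^ 2 = w ^ 2 := by
  set S := (univ : Finset F).image (· ^ 2) with hS
  have h0S : (0 : F) ∈ S := mem_image.mpr ⟨0, mem_univ _, by ring⟩
  by_cases hneg : IsSquare (-1 : F)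
  · obtain ⟨i, hi⟩ := hneg
    have hi0 : i ≠ 0 := by
      intro h
      rw [h, mul_zero] at hi
      exact neg_ne_zero.mpr one_ne_zero hi
    exact ⟨1, i, one_ne_zero, hi0, by linear_combination h3 + hi⟩
  · by_contra hcon
    push_neg at hcon
    set T := S.erase 0 with hT
    set N := (univ : Finset F) \ S with hN
    have hmap : T.image (fun s => 1 + s) ⊆ N := by
      intro b hb
      obtain ⟨s, hs, rfl⟩ := mem_image.mp hb
      have hs0 : s ≠ 0 := ne_of_mem_erase hs
      obtain ⟨x, -, hx⟩ := mem_image.mp (mem_of_mem_erase hs)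
      have hx0 : x ≠ 0 := fun h => hs0 (by rw [← hx, h]; ring)
      rw [hN, mem_sdiff]
      refine ⟨mem_univ _, fun hmem => ?_⟩
      obtain ⟨w, -, hw⟩ := mem_image.mp hmem
      have hw0 : w ≠ 0 := by
        intro h
        rw [h] at hw
        apply hneg
        exact ⟨x, by linear_combination hw - hx⟩
      exact hcon x w hx0 hw0 (by rw [hx, hw])
    have hinj : (T.image (fun s => 1 + s)).card = T.card :=
      Finset.card_image_of_injective _ (add_right_injective 1)
    have hcT : T.card = S.card - 1 := card_erase_of_mem h0S
    have hcN : N.card = Fintype.card F - S.card := by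
      rw [hN, card_sdiff_of_subset (subset_univ S), card_univ]
    have hSpos : 1 ≤ S.card := card_pos.mpr ⟨0, h0S⟩
    have hqpos : S.card ≤ Fintype.card F := by
      calc S.card ≤ (univ : Finset F).card := card_le_card (subset_univ S)
      _ = Fintype.card F := card_univ
    have hcards : N.card = T.card := by omega
    have heq : T.image (fun s => 1 + s) = N :=
      Finset.eq_of_subset_of_card_le hmap (by omega)
    have hsumN : ∑ n ∈ N, n = 0 := by
      have h : ∑ x ∈ univ \ S, x + ∑ x ∈ S, x = ∑ x : F, x :=
        Finset.sum_sdiff (subset_univ S)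
      have hsumS : ∑ s ∈ S, s = 0 := by
        rw [← Finset.sum_erase_add _ _ h0S, ← hT, hsumT]
        ring
      rw [hN]
      linear_combination h - hsumS + hsumU
    have hsum2 : ∑ s ∈ T, (1 + s) = ∑ n ∈ N, n := by
      rw [← heq]
      exact (Finset.sum_image (g := fun s : F => 1 + s) (s := T) (f := fun s : F => s)
        (fun x _ y _ h => add_left_cancel h)).symm
    rw [hsumN, Finset.sum_add_distrib, hsumT, Finset.sum_const, nsmul_eq_mul, mul_one,
      add_zero] at hsum2
    have h2T : ((2 * T.card : ℕ) : F) = 0 := by push_cast; rw [hsum2]; ring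
    have hTval : 2 * T.card = Fintype.card F - 1 := by omega
    rw [hTval] at h2T
    rw [Nat.cast_sub (by omega)] at h2T
    rw [hq0] at h2T
    push_cast at h2T
    have : (1 : F) = 0 := by linear_combination -h2T
    exact one_ne_zero this

private lemma aux_exists (F : Type*) [Field F] [Fintype F] (e : ℕ) (he : 2 ≤ e)
    (hcard : Fintype.card F = 3 ^ e) (a : F) (ha : a ≠ 0) :
    ∃ x y : F, x ≠ 0 ∧ y ≠ 0 ∧ x ^ 2 + y ^ 2 = a := by
  classical
  -- characteristic 3
  have h3 : (3 : F) = 0 := by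
    obtain ⟨p, hp⟩ := CharP.exists F
    haveI := hp
    obtain ⟨n, hpp, hcard'⟩ := FiniteField.card F p
    have hp3 : p = 3 := by
      have hdvd : p ∣ 3 ^ e := by
        rw [← hcard, hcard']
        exact dvd_pow_self p n.2.ne'
      have h := (Nat.Prime.prime hpp).dvd_of_dvd_pow (n := e) hdvd
      exact (Nat.prime_dvd_prime_iff_eq hpp Nat.prime_three).mp h
    subst hp3
    exact_mod_cast CharP.cast_eq_zero F 3
  have h2 : (2 : F) ≠ 0 := by
    intro h
    exact one_ne_zero (by linear_combination h3 - h : (1:F) = 0)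
  have hq0 : ((Fintype.card F : F)) = 0 := by
    rw [hcard]
    push_cast
    rw [h3]
    exact zero_pow (by omega)
  have hcs := aux_sq_card F h2
  have hq9 : 9 ≤ Fintype.card F := by
    rw [hcard]
    calc (9:ℕ) = 3 ^ 2 := by norm_num
    _ ≤ 3 ^ e := Nat.pow_le_pow_right (by norm_num) he
  have h0S : (0 : F) ∈ (univ : Finset F).image (· ^ 2) := mem_image.mpr ⟨0, mem_univ _, by ring⟩
  have hbig : 2 ≤ (((univ : Finset F).image (· ^ 2)).erase 0).card := by
    rw [card_erase_of_mem h0S]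
    omega
  have hsumT := aux_sum_sqs F hbig
  have hsumU := aux_sum_univ F h2
  by_cases hsa : IsSquare a
  · obtain ⟨b, hb⟩ := hsa
    have hb0 : b ≠ 0 := fun h => ha (by rw [hb, h, mul_zero])
    obtain ⟨lam, w, hl, hw, hlw⟩ := aux_B F h3 hq0 hcs hsumT hsumU
    have hwinv : w * w⁻¹ = 1 := mul_inv_cancel₀ hw
    refine ⟨b * w⁻¹, b * lam * w⁻¹, mul_ne_zero hb0 (inv_ne_zero hw),
      mul_ne_zero (mul_ne_zero hb0 hl) (inv_ne_zero hw), ?_⟩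
    linear_combination b^2*(w⁻¹)^2*hlw - hb + b^2*(w⁻¹*w+1)*hwinv
  · obtain ⟨c, hcsq, hnc⟩ := aux_A F hq0 hcs
    have hc0 : c ≠ 0 := by
      intro h
      exact hnc (by rw [h, add_zero]; exact ⟨1, by ring⟩)
    obtain ⟨lam, hlam⟩ := hcsq
    have hl0 : lam ≠ 0 := fun h => hc0 (by rw [hlam, h, mul_zero])
    have hd0 : (1 + c) ≠ 0 := fun h => hnc (by rw [h]; exact ⟨0, by ring⟩)
    obtain ⟨r, hr⟩ := aux_quot F a (1 + c) hsa hnc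
    have hr0 : r ≠ 0 := by
      intro h
      rw [h, mul_zero] at hr
      exact (mul_ne_zero ha (inv_ne_zero hd0)) hr
    have hdinv : (1 + c) * (1 + c)⁻¹ = 1 := mul_inv_cancel₀ hd0
    refine ⟨r, lam * r, hr0, mul_ne_zero hl0 hr0, ?_⟩
    linear_combination (-(1+c))*hr + a*hdinv + (-(r^2))*hlam

theorem stmt_18 (F : Type*) [Field F] [Fintype F] (e : ℕ) (he : 2 ≤ e)
    (hcard : Fintype.card F = 3 ^ e) (a : F) (ha : a ≠ 0) :
    (∃ x y : F, x ≠ 0 ∧ y ≠ 0 ∧ x ^ 2 + y ^ 2 = a ∧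
      ((x + y) ^ 4 + a * (x + y) ^ 2) - (x ^ 4 + a * x ^ 2) - (y ^ 4 + a * y ^ 2) = 0) ∧
    ¬ ∀ ε : F, ε ≠ 0 → Function.Bijective
        (fun x => ((x + ε) ^ 4 + a * (x + ε) ^ 2) - (x ^ 4 + a * x ^ 2) - (ε ^ 4 + a * ε ^ 2)) := by
  have h3 : (3 : F) = 0 := by
    obtain ⟨p, hp⟩ := CharP.exists F
    haveI := hp
    obtain ⟨n, hpp, hcard'⟩ := FiniteField.card F p
    have hp3 : p = 3 := by
      have hdvd : p ∣ 3 ^ e := by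
        rw [← hcard, hcard']
        exact dvd_pow_self p n.2.ne'
      have h := (Nat.Prime.prime hpp).dvd_of_dvd_pow (n := e) hdvd
      exact (Nat.prime_dvd_prime_iff_eq hpp Nat.prime_three).mp h
    subst hp3
    exact_mod_cast CharP.cast_eq_zero F 3
  obtain ⟨x, y, hx, hy, hxy⟩ := aux_exists F e he hcard a ha
  have hΔ : ((x + y) ^ 4 + a * (x + y) ^ 2) - (x ^ 4 + a * x ^ 2) - (y ^ 4 + a * y ^ 2) = 0 := by
    linear_combination (-2*x*y)*hxy + (2*x^3*y+2*x^2*y^2+2*x*y^3)*h3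
  refine ⟨⟨x, y, hx, hy, hxy, hΔ⟩, ?_⟩
  intro hbij
  have hinj := (hbij y hy).injective
  have e1 : ((x + y) ^ 4 + a * (x + y) ^ 2) - (x ^ 4 + a * x ^ 2) - (y ^ 4 + a * y ^ 2) =
      ((0 + y) ^ 4 + a * (0 + y) ^ 2) - ((0:F) ^ 4 + a * 0 ^ 2) - (y ^ 4 + a * y ^ 2) := by
    rw [hΔ]
    ring
  exact hx (hinj e1)
end
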